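/- arXiv:2311.14050 — 2 statements merged into one kernel-verified Lean document; each statement's English description precedes it below -/
import Mathlib

section
/- If g is twice continuously differentiable, γ = 1 + O(Δt^{p-1}) with p ≥ 2, and u^{n+1} - u^n_γ = O(Δt), then g(u^{n+1}_γ) = g(u^n_γ) + γ(g(u^{n+1}) - g(u^n_γ)) + O(Δt^{p+1}), where u^{n+1}_γ = u^n_γ + γ(u^{n+1} - u^n_γ). -/
/-- If `g` is twice continuously differentiable with second derivative bounded by `M₂`
on an open convex set containing the relevant points, `γ = 1 + O(Δt^(p-1))` with `p ≥ 2`,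
and `u^{n+1} - u^n_γ = O(Δt)`, then
`g(u^{n+1}_γ) = g(u^n_γ) + γ(g(u^{n+1}) - g(u^n_γ)) + O(Δt^(p+1))`. -/
theorem stmt_2 {N M : ℕ}
    (g : EuclideanSpace ℝ (Fin N) → EuclideanSpace ℝ (Fin M))
    (g' : EuclideanSpace ℝ (Fin N) →
      EuclideanSpace ℝ (Fin N) →L[ℝ] EuclideanSpace ℝ (Fin M))
    (g'' : EuclideanSpace ℝ (Fin N) →
      EuclideanSpace ℝ (Fin N) →L[ℝ]
        (EuclideanSpace ℝ (Fin N) →L[ℝ] EuclideanSpace ℝ (Fin M)))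
    (U : Set (EuclideanSpace ℝ (Fin N))) (hU : IsOpen U) (hUc : Convex ℝ U)
    (hg : ∀ x ∈ U, HasFDerivAt g (g' x) x)
    (hg' : ∀ x ∈ U, HasFDerivAt g' (g'' x) x)
    (hg'cont : ContinuousOn g'' U)
    (M₂ : ℝ) (hM₂ : ∀ x ∈ U, ‖g'' x‖ ≤ M₂)
    (p : ℕ) (hp : 2 ≤ p) (Δt C₁ C₂ γ : ℝ) (hΔt : 0 < Δt) (hΔt1 : Δt ≤ 1)
    (uγ unp1 unp1γ : EuclideanSpace ℝ (Fin N))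
    (hγ : |γ - 1| ≤ C₁ * Δt ^ (p - 1))
    (hu : ‖unp1 - uγ‖ ≤ C₂ * Δt)
    (hdef : unp1γ = uγ + γ • (unp1 - uγ))
    (h0 : uγ ∈ U) (h1 : unp1 ∈ U) (h2 : unp1γ ∈ U) :
    ‖g unp1γ - g uγ - γ • (g unp1 - g uγ)‖
      ≤ (M₂ / 2) * (C₁ ^ 2 * C₂ ^ 2 + C₁ * C₂ ^ 2) * Δt ^ (p + 1) := by
  set v : EuclideanSpace ℝ (Fin N) := unp1 - uγ with hv
  have hM₂0 : 0 ≤ M₂ := (norm_nonneg (g'' uγ)).trans (hM₂ uγ h0)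
  -- Lipschitz bound for g' on U
  have hlip : ∀ x ∈ U, ∀ y ∈ U, ‖g' y - g' x‖ ≤ M₂ * ‖y - x‖ := by
    intro x hx y hy
    exact hUc.norm_image_sub_le_of_norm_hasFDerivWithin_le
      (fun z hz => (hg' z hz).hasFDerivWithinAt) hM₂ hx hy
  -- membership of segment points
  have hmem1 : ∀ τ : ℝ, τ ∈ Set.Icc (0:ℝ) 1 → uγ + (γ * τ) • v ∈ U := by
    intro τ hτ
    have : uγ + (γ * τ) • v = (1 - τ) • uγ + τ • unp1γ := by
      rw [hdef]
      module
    rw [this]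
    exact hUc h0 h2 (by linarith [hτ.2]) hτ.1 (by ring)
  have hmem2 : ∀ τ : ℝ, τ ∈ Set.Icc (0:ℝ) 1 → uγ + τ • v ∈ U := by
    intro τ hτ
    have : uγ + τ • v = (1 - τ) • uγ + τ • unp1 := by
      simp only [hv]; module
    rw [this]
    exact hUc h0 h1 (by linarith [hτ.2]) hτ.1 (by ring)
  -- auxiliary function
  set h : ℝ → EuclideanSpace ℝ (Fin M) :=
    fun τ => g (uγ + (γ * τ) • v) - γ • g (uγ + τ • v) - (g uγ - γ • g uγ) with hh
  set h' : ℝ → EuclideanSpace ℝ (Fin M) :=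
    fun τ => (g' (uγ + (γ * τ) • v)) (γ • v) - γ • (g' (uγ + τ • v)) v with hh'
  have hderiv : ∀ τ ∈ Set.Icc (0:ℝ) 1, HasDerivAt h (h' τ) τ := by
    intro τ hτ
    have hc1 : HasDerivAt (fun τ : ℝ => uγ + (γ * τ) • v) (γ • v) τ := by
      have : HasDerivAt (fun τ : ℝ => (γ * τ) • v) (γ • v) τ := by
        simpa using ((hasDerivAt_id τ).const_mul γ).smul_const v
      simpa using this.const_add uγ
    have hc2 : HasDerivAt (fun τ : ℝ => uγ + τ • v) v τ := by
      have : HasDerivAt (fun τ : ℝ => τ • v) v τ := by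
        simpa using (hasDerivAt_id τ).smul_const v
      simpa using this.const_add uγ
    have d1 : HasDerivAt (fun τ : ℝ => g (uγ + (γ * τ) • v))
        ((g' (uγ + (γ * τ) • v)) (γ • v)) τ :=
      (hg _ (hmem1 τ hτ)).comp_hasDerivAt τ hc1
    have d2 : HasDerivAt (fun τ : ℝ => g (uγ + τ • v)) ((g' (uγ + τ • v)) v) τ :=
      (hg _ (hmem2 τ hτ)).comp_hasDerivAt τ hc2
    simpa [hh, hh'] using ((d1.sub (d2.const_smul γ)).sub_const (g uγ - γ • g uγ))
  -- bound on the derivative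
  set K : ℝ := |γ| * (M₂ * (|γ - 1| * ‖v‖)) * ‖v‖ with hK
  have hbound : ∀ τ ∈ Set.Ico (0:ℝ) 1, ‖h' τ‖ ≤ K * τ := by
    intro τ hτ
    have hτ' : τ ∈ Set.Icc (0:ℝ) 1 := ⟨hτ.1, le_of_lt hτ.2⟩
    have key : h' τ = γ • (((g' (uγ + (γ * τ) • v)) - (g' (uγ + τ • v))) v) := by
      simp [hh', ContinuousLinearMap.sub_apply, map_smul, smul_sub]
    rw [key]
    have hdiff : ‖(g' (uγ + (γ * τ) • v)) - (g' (uγ + τ • v))‖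
        ≤ M₂ * (|γ - 1| * τ * ‖v‖) := by
      have := hlip _ (hmem2 τ hτ') _ (hmem1 τ hτ')
      have heq : (uγ + (γ * τ) • v) - (uγ + τ • v) = ((γ - 1) * τ) • v := by
        module
      rw [heq] at this
      calc ‖(g' (uγ + (γ * τ) • v)) - (g' (uγ + τ • v))‖
          ≤ M₂ * ‖((γ - 1) * τ) • v‖ := this
        _ = M₂ * (|γ - 1| * τ * ‖v‖) := by
            rw [norm_smul, Real.norm_eq_abs, abs_mul, abs_of_nonneg hτ.1]
    calc ‖γ • (((g' (uγ + (γ * τ) • v)) - (g' (uγ + τ • v))) v)‖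
        = |γ| * ‖((g' (uγ + (γ * τ) • v)) - (g' (uγ + τ • v))) v‖ := by
          rw [norm_smul, Real.norm_eq_abs]
      _ ≤ |γ| * (‖(g' (uγ + (γ * τ) • v)) - (g' (uγ + τ • v))‖ * ‖v‖) := by
          gcongr
          exact ContinuousLinearMap.le_opNorm _ _
      _ ≤ |γ| * ((M₂ * (|γ - 1| * τ * ‖v‖)) * ‖v‖) := by
          gcongr
      _ = K * τ := by rw [hK]; ring
  -- fencing theorem
  have hcont : ContinuousOn h (Set.Icc (0:ℝ) 1) :=
    fun τ hτ => ((hderiv τ hτ).continuousAt).continuousWithinAt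
  have hB : ∀ τ : ℝ, HasDerivAt (fun τ => K * τ ^ 2 / 2) (K * τ) τ := by
    intro τ
    have : HasDerivAt (fun τ : ℝ => K * τ ^ 2 / 2) (K * (2 * τ ^ 1) / 2) τ := by
      exact (((hasDerivAt_pow 2 τ).const_mul K).div_const 2)
    simpa using this.congr_deriv (by ring)
  have h00 : ‖h 0‖ ≤ K * (0:ℝ) ^ 2 / 2 := by
    simp [hh]
  have key := image_norm_le_of_norm_deriv_right_le_deriv_boundary hcont
    (fun τ hτ => (hderiv τ ⟨hτ.1, le_of_lt hτ.2⟩).hasDerivWithinAt) h00 hB hbound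
    (Set.right_mem_Icc.mpr zero_le_one)
  -- identify h 1 with the target
  have h1eq : h 1 = g unp1γ - g uγ - γ • (g unp1 - g uγ) := by
    have e : uγ + (1:ℝ) • v = unp1 := by simp [hv]
    have e' : uγ + (γ * 1) • v = unp1γ := by rw [hdef, mul_one]
    simp only [hh]
    rw [e, e']
    module
  rw [h1eq] at key
  have key' : ‖g unp1γ - g uγ - γ • (g unp1 - g uγ)‖ ≤ K / 2 := by
    simpa using key
  refine key'.trans ?_
  -- arithmetic
  have ha0 : 0 ≤ C₁ * Δt ^ (p - 1) := le_trans (abs_nonneg _) hγ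
  have hb0 : 0 ≤ C₂ * Δt := le_trans (norm_nonneg _) hu
  have hγabs : |γ| ≤ 1 + C₁ * Δt ^ (p - 1) := by
    have habs : |γ| ≤ |γ - 1| + 1 := by simpa using abs_add_le (γ - 1) 1
    linarith
  have hvn : 0 ≤ ‖v‖ := norm_nonneg _
  have hKle : K ≤ (1 + C₁ * Δt ^ (p - 1)) * (M₂ * ((C₁ * Δt ^ (p - 1)) * (C₂ * Δt))) * (C₂ * Δt) := by
    rw [hK]
    have hab : |γ - 1| * ‖v‖ ≤ (C₁ * Δt ^ (p - 1)) * (C₂ * Δt) :=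
      mul_le_mul hγ hu (norm_nonneg _) ha0
    have hab2 : M₂ * (|γ - 1| * ‖v‖) ≤ M₂ * ((C₁ * Δt ^ (p - 1)) * (C₂ * Δt)) :=
      mul_le_mul_of_nonneg_left hab hM₂0
    have hab3 : |γ| * (M₂ * (|γ - 1| * ‖v‖))
        ≤ (1 + C₁ * Δt ^ (p - 1)) * (M₂ * ((C₁ * Δt ^ (p - 1)) * (C₂ * Δt))) :=
      mul_le_mul hγabs hab2
        (mul_nonneg hM₂0 (mul_nonneg (abs_nonneg _) (norm_nonneg _)))
        (by linarith)
    exact mul_le_mul hab3 hu (norm_nonneg _)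
      (mul_nonneg (by linarith) (mul_nonneg hM₂0 (mul_nonneg ha0 hb0)))
  have hΔp : Δt ^ (2 * p) ≤ Δt ^ (p + 1) :=
    pow_le_pow_of_le_one (le_of_lt hΔt) hΔt1 (by omega)
  have hC₁ : 0 ≤ C₁ := by
    by_contra hneg
    push_neg at hneg
    have hpw : 0 < Δt ^ (p - 1) := pow_pos hΔt _
    have : C₁ * Δt ^ (p - 1) < 0 := mul_neg_of_neg_of_pos hneg hpw
    linarith
  have e1 : Δt ^ (p - 1) * Δt ^ 2 = Δt ^ (p + 1) := by
    rw [← pow_add]; congr 1; omega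
  have e2 : (Δt ^ (p - 1)) ^ 2 * Δt ^ 2 = Δt ^ (2 * p) := by
    rw [← pow_mul, ← pow_add]; congr 1; omega
  calc K / 2 ≤ ((1 + C₁ * Δt ^ (p - 1)) * (M₂ * ((C₁ * Δt ^ (p - 1)) * (C₂ * Δt))) * (C₂ * Δt)) / 2 := by
        linarith
    _ = (M₂ / 2) * (C₁ * C₂ ^ 2) * (Δt ^ (p - 1) * Δt ^ 2)
        + (M₂ / 2) * (C₁ ^ 2 * C₂ ^ 2) * ((Δt ^ (p - 1)) ^ 2 * Δt ^ 2) := by ring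
    _ = (M₂ / 2) * (C₁ * C₂ ^ 2) * Δt ^ (p + 1)
        + (M₂ / 2) * (C₁ ^ 2 * C₂ ^ 2) * Δt ^ (2 * p) := by rw [e1, e2]
    _ ≤ (M₂ / 2) * (C₁ * C₂ ^ 2) * Δt ^ (p + 1)
        + (M₂ / 2) * (C₁ ^ 2 * C₂ ^ 2) * Δt ^ (p + 1) := by
        have hcoef : 0 ≤ (M₂ / 2) * (C₁ ^ 2 * C₂ ^ 2) :=
          mul_nonneg (by linarith) (mul_nonneg (sq_nonneg _) (sq_nonneg _))
        have := mul_le_mul_of_nonneg_left hΔp hcoef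
        linarith
    _ = (M₂ / 2) * (C₁ ^ 2 * C₂ ^ 2 + C₁ * C₂ ^ 2) * Δt ^ (p + 1) := by ring
end

section
/- If g is twice continuously differentiable, γ = 1 + O(Δt^{p-1}) with p ≥ 2 (so γ is bounded away from 0 for small Δt), and u^{n+1} - u^n_γ = O(Δt), then g(u^{n+1}) = g(u^n_γ) + (1/γ)(g(u^{n+1}_γ) - g(u^n_γ)) + O(Δt^{p+1}). -/
/-- If `g` is C² with bounded second derivative, `γ = 1 + O(Δt^(p-1))` with `p ≥ 2`
(and `γ ≥ 1/2` for small `Δt`), and `u^{n+1} - u^n_γ = O(Δt)`, then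
`g(u^{n+1}) = g(u^n_γ) + (1/γ)(g(u^{n+1}_γ) - g(u^n_γ)) + O(Δt^(p+1))`. -/
theorem stmt_3 {N M : ℕ}
    (g : EuclideanSpace ℝ (Fin N) → EuclideanSpace ℝ (Fin M))
    (g' : EuclideanSpace ℝ (Fin N) →
      EuclideanSpace ℝ (Fin N) →L[ℝ] EuclideanSpace ℝ (Fin M))
    (g'' : EuclideanSpace ℝ (Fin N) →
      EuclideanSpace ℝ (Fin N) →L[ℝ]
        (EuclideanSpace ℝ (Fin N) →L[ℝ] EuclideanSpace ℝ (Fin M)))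
    (U : Set (EuclideanSpace ℝ (Fin N))) (hU : IsOpen U) (hUc : Convex ℝ U)
    (hg : ∀ x ∈ U, HasFDerivAt g (g' x) x)
    (hg' : ∀ x ∈ U, HasFDerivAt g' (g'' x) x)
    (hg'cont : ContinuousOn g'' U)
    (M₂ : ℝ) (hM₂ : ∀ x ∈ U, ‖g'' x‖ ≤ M₂)
    (p : ℕ) (hp : 2 ≤ p) (Δt C₁ C₂ γ : ℝ) (hΔt : 0 < Δt) (hΔt1 : Δt ≤ 1)
    (hγhalf : (1 : ℝ) / 2 ≤ γ)
    (uγ unp1 unp1γ : EuclideanSpace ℝ (Fin N))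
    (hγ : |γ - 1| ≤ C₁ * Δt ^ (p - 1))
    (hu : ‖unp1 - uγ‖ ≤ C₂ * Δt)
    (hdef : unp1γ = uγ + γ • (unp1 - uγ))
    (h0 : uγ ∈ U) (h1 : unp1 ∈ U) (h2 : unp1γ ∈ U) :
    ‖g uγ + γ⁻¹ • (g unp1γ - g uγ) - g unp1‖
      ≤ M₂ * (C₁ ^ 2 * C₂ ^ 2 + C₁ * C₂ ^ 2) * Δt ^ (p + 1) := by
  have hγpos : (0 : ℝ) < γ := by linarith
  have hγne : γ ≠ 0 := ne_of_gt hγpos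
  set e : EuclideanSpace ℝ (Fin N) := unp1 - uγ with he
  -- membership of points on the two segments
  have memb : ∀ t ∈ Set.Icc (0 : ℝ) 1, uγ + t • e ∈ U := by
    intro t ht
    have : (1 - t) • uγ + t • unp1 ∈ U :=
      hUc h0 h1 (by linarith [ht.2]) ht.1 (by ring)
    convert this using 1
    simp [he, smul_sub, sub_smul]
    abel
  have mema : ∀ t ∈ Set.Icc (0 : ℝ) 1, uγ + (t * γ) • e ∈ U := by
    intro t ht
    have : (1 - t) • uγ + t • unp1γ ∈ U :=
      hUc h0 h2 (by linarith [ht.2]) ht.1 (by ring)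
    convert this using 1
    rw [hdef]
    simp [he, smul_smul, smul_add, sub_smul]
    abel
  -- the auxiliary function
  set φ : ℝ → EuclideanSpace ℝ (Fin M) :=
    fun t => γ⁻¹ • g (uγ + (t * γ) • e) - g (uγ + t • e) with hφ
  have key : ∀ t ∈ Set.Icc (0 : ℝ) 1,
      HasDerivAt φ (g' (uγ + (t * γ) • e) e - g' (uγ + t • e) e) t := by
    intro t ht
    have l1 : HasDerivAt (fun s : ℝ => uγ + (s * γ) • e) (γ • e) t := by
      simpa using (((hasDerivAt_id t).mul_const γ).smul_const e).const_add uγ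
    have l2 : HasDerivAt (fun s : ℝ => uγ + s • e) e t := by
      simpa using ((hasDerivAt_id t).smul_const e).const_add uγ
    have d1 : HasDerivAt (fun s : ℝ => g (uγ + (s * γ) • e))
        (g' (uγ + (t * γ) • e) (γ • e)) t :=
      (hg _ (mema t ht)).comp_hasDerivAt t l1
    have d2 : HasDerivAt (fun s : ℝ => g (uγ + s • e)) (g' (uγ + t • e) e) t :=
      (hg _ (memb t ht)).comp_hasDerivAt t l2
    have h3 := (d1.const_smul γ⁻¹).sub d2
    have heq2 : γ⁻¹ • (g' (uγ + (t * γ) • e)) (γ • e) = g' (uγ + (t * γ) • e) e := by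
      rw [map_smul, smul_smul, inv_mul_cancel₀ hγne, one_smul]
    rw [heq2] at h3
    exact h3
  have bound : ∀ t ∈ Set.Ico (0 : ℝ) 1,
      ‖g' (uγ + (t * γ) • e) e - g' (uγ + t • e) e‖ ≤ M₂ * |γ - 1| * ‖e‖ ^ 2 := by
    intro t ht
    have ht' : t ∈ Set.Icc (0 : ℝ) 1 := ⟨ht.1, le_of_lt ht.2⟩
    have hgdiff : ‖g' (uγ + (t * γ) • e) - g' (uγ + t • e)‖
        ≤ M₂ * ‖(uγ + (t * γ) • e) - (uγ + t • e)‖ :=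
      hUc.norm_image_sub_le_of_norm_hasFDerivWithin_le
        (fun x hx => (hg' x hx).hasFDerivWithinAt) hM₂ (memb t ht') (mema t ht')
    have hdiff : ‖(uγ + (t * γ) • e) - (uγ + t • e)‖ ≤ |γ - 1| * ‖e‖ := by
      have : (uγ + (t * γ) • e) - (uγ + t • e) = (t * (γ - 1)) • e := by
        rw [mul_sub, mul_one, sub_smul]
        abel
      rw [this, norm_smul, Real.norm_eq_abs, abs_mul]
      have ht1 : |t| ≤ 1 := by rw [abs_of_nonneg ht.1]; linarith [ht.2]
      rw [mul_assoc]
      exact mul_le_of_le_one_left (mul_nonneg (abs_nonneg _) (norm_nonneg _)) ht1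
    calc ‖g' (uγ + (t * γ) • e) e - g' (uγ + t • e) e‖
        = ‖(g' (uγ + (t * γ) • e) - g' (uγ + t • e)) e‖ := by
          rw [ContinuousLinearMap.sub_apply]
      _ ≤ ‖g' (uγ + (t * γ) • e) - g' (uγ + t • e)‖ * ‖e‖ :=
          ContinuousLinearMap.le_opNorm _ _
      _ ≤ (M₂ * (|γ - 1| * ‖e‖)) * ‖e‖ := by
          apply mul_le_mul_of_nonneg_right _ (norm_nonneg e)
          exact hgdiff.trans (mul_le_mul_of_nonneg_left hdiff
            ((norm_nonneg (g'' uγ)).trans (hM₂ uγ h0)))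
      _ = M₂ * |γ - 1| * ‖e‖ ^ 2 := by ring
  have mv : ‖φ 1 - φ 0‖ ≤ M₂ * |γ - 1| * ‖e‖ ^ 2 :=
    norm_image_sub_le_of_norm_deriv_le_segment_01'
      (fun t ht => (key t ht).hasDerivWithinAt) bound
  have heq : g uγ + γ⁻¹ • (g unp1γ - g uγ) - g unp1 = φ 1 - φ 0 := by
    have e1 : uγ + (1 * γ : ℝ) • e = unp1γ := by
      rw [hdef, one_mul]
    have e0 : uγ + ((0 : ℝ) * γ) • e = uγ := by simp
    simp only [hφ, e1, e0, one_smul, zero_smul, add_zero]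
    rw [show uγ + e = unp1 by simp [he], smul_sub]
    abel
  rw [heq]
  refine mv.trans ?_
  -- arithmetic
  have hM₂0 : 0 ≤ M₂ := (norm_nonneg (g'' uγ)).trans (hM₂ uγ h0)
  have hC₁0 : 0 ≤ C₁ * Δt ^ (p - 1) := (abs_nonneg _).trans hγ
  have hC₂0 : 0 ≤ C₂ * Δt := (norm_nonneg _).trans hu
  have hC₁ : 0 ≤ C₁ := nonneg_of_mul_nonneg_left hC₁0 (pow_pos hΔt _)
  have hC₂ : 0 ≤ C₂ := nonneg_of_mul_nonneg_left hC₂0 hΔt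
  have h1 : |γ - 1| * ‖e‖ ^ 2 ≤ (C₁ * Δt ^ (p - 1)) * (C₂ * Δt) ^ 2 := by
    apply mul_le_mul hγ _ (sq_nonneg _) hC₁0
    exact pow_le_pow_left₀ (norm_nonneg _) hu 2
  have hpow : Δt ^ (p - 1) * Δt ^ 2 = Δt ^ (p + 1) := by
    rw [← pow_add]; congr 1; omega
  calc M₂ * |γ - 1| * ‖e‖ ^ 2 ≤ M₂ * ((C₁ * Δt ^ (p - 1)) * (C₂ * Δt) ^ 2) := by
        rw [mul_assoc]; exact mul_le_mul_of_nonneg_left h1 hM₂0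
    _ = M₂ * (C₁ * C₂ ^ 2) * (Δt ^ (p - 1) * Δt ^ 2) := by ring
    _ = M₂ * (C₁ * C₂ ^ 2) * Δt ^ (p + 1) := by rw [hpow]
    _ ≤ M₂ * (C₁ ^ 2 * C₂ ^ 2 + C₁ * C₂ ^ 2) * Δt ^ (p + 1) := by
        apply mul_le_mul_of_nonneg_right _ (le_of_lt (pow_pos hΔt _))
        nlinarith [mul_nonneg hM₂0 (mul_nonneg (mul_nonneg hC₁ hC₁) (mul_nonneg hC₂ hC₂))]
end
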